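/- Let M be a universal n-linear order, let m ∈ {1, …, n}, and let g ∈ Aut(M) be such that for every x ∈ M there exists y with x <_m y and y <_m g y, and there exists z with z <_m x and g z <_m z. Then there exists h ∈ Aut(M) such that the automorphism f = g ∘ h⁻¹ ∘ g ∘ h has, with respect to <_m, a +-orbital unbounded above and a −-orbital unbounded below; that is, there exist a, b ∈ M with a <_m f a and {f^k a : k ∈ ℤ} unbounded above in <_m, and with f b <_m b and {f^k b : k ∈ ℤ} unbounded below in <_m. -/

import Mathlib

/-- A set `M` equipped with `n` linear orders `<_1, …, <_n`. -/
structure NLinear (n : ℕ) (M : Type*) where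
  lt : Fin n → M → M → Prop
  irrefl : ∀ i a, ¬ lt i a a
  trans : ∀ i a b c, lt i a b → lt i b c → lt i a c
  total : ∀ i a b, lt i a b ∨ a = b ∨ lt i b a

/-- `M` with its `n` linear orders is a universal `n`-linear order: it is countably
infinite and has the one-point extension property. -/
structure IsUniversalNLinear (n : ℕ) (M : Type*) (L : NLinear n M) : Prop where
  countable : Countable M
  infinite : Infinite M
  extension : ∀ (A : Finset M) (D : Fin n → Set M),
    (∀ i, D i ⊆ ↑A) →
    (∀ i, ∀ a ∈ A, ∀ b ∈ A, L.lt i a b → b ∈ D i → a ∈ D i) →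
    ∃ x, x ∉ A ∧ ∀ i, ∀ a ∈ A, (L.lt i a x ↔ a ∈ D i)

/-- The automorphism group of an `n`-linearly ordered set, as a subgroup of `Equiv.Perm M`. -/
def NLinear.aut {n : ℕ} {M : Type*} (L : NLinear n M) : Subgroup (Equiv.Perm M) where
  carrier := {g | ∀ i a b, L.lt i a b ↔ L.lt i (g a) (g b)}
  one_mem' := fun _ _ _ => Iff.rfl
  mul_mem' := by
    intro g h hg hh i a b
    exact (hh i a b).trans (hg i (h a) (h b))
  inv_mem' := by
    intro g hg i a b
    simpa using (hg i (g⁻¹ a) (g⁻¹ b)).symm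

/-- `f` has a single `+`-orbital with respect to `<_m`. -/
def NLinear.SinglePlus {n : ℕ} {M : Type*} (L : NLinear n M) (m : Fin n)
    (f : Equiv.Perm M) : Prop :=
  ∃ a : M, L.lt m a (f a) ∧ (∀ x : M, ∃ k : ℤ, L.lt m x ((f ^ k) a)) ∧
    (∀ x : M, ∃ k : ℤ, L.lt m ((f ^ k) a) x)

/-- `f` has a single `−`-orbital with respect to `<_m`. -/
def NLinear.SingleMinus {n : ℕ} {M : Type*} (L : NLinear n M) (m : Fin n)
    (f : Equiv.Perm M) : Prop :=
  ∃ a : M, L.lt m (f a) a ∧ (∀ x : M, ∃ k : ℤ, L.lt m x ((f ^ k) a)) ∧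
    (∀ x : M, ∃ k : ℤ, L.lt m ((f ^ k) a) x)

/-- `f` has a `+`-orbital unbounded above with respect to `<_m`. -/
def NLinear.PlusUnbAbove {n : ℕ} {M : Type*} (L : NLinear n M) (m : Fin n)
    (f : Equiv.Perm M) : Prop :=
  ∃ a : M, L.lt m a (f a) ∧ ∀ x : M, ∃ k : ℤ, L.lt m x ((f ^ k) a)

/-- `f` has a `−`-orbital unbounded below with respect to `<_m`. -/
def NLinear.MinusUnbBelow {n : ℕ} {M : Type*} (L : NLinear n M) (m : Fin n)
    (f : Equiv.Perm M) : Prop :=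
  ∃ b : M, L.lt m (f b) b ∧ ∀ x : M, ∃ k : ℤ, L.lt m ((f ^ k) b) x

namespace Stmt10Aux

variable {n : ℕ} {M : Type*}

attribute [local instance] Classical.propDecidable

/-- asymmetry -/
theorem asymm (L : NLinear n M) {i : Fin n} {a b : M} (h1 : L.lt i a b) (h2 : L.lt i b a) :
    False := L.irrefl i a (L.trans i a b a h1 h2)

theorem ne_of_lt (L : NLinear n M) {i : Fin n} {a b : M} (h1 : L.lt i a b) : a ≠ b := by
  rintro rfl; exact L.irrefl i a h1

theorem eq_of_not_lt (L : NLinear n M) (m : Fin n) {a b : M} (h1 : ¬ L.lt m a b)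
    (h2 : ¬ L.lt m b a) : a = b := by
  rcases L.total m a b with h | h | h
  · exact absurd h h1
  · exact h
  · exact absurd h h2

theorem lt_of_not (L : NLinear n M) (m : Fin n) {a b : M} (h1 : ¬ L.lt m a b)
    (h2 : a ≠ b) : L.lt m b a := by
  rcases L.total m a b with h | h | h
  · exact absurd h h1
  · exact absurd h h2
  · exact h

/-- the flipped structure -/
def flip (L : NLinear n M) : NLinear n M where
  lt := fun i a b => L.lt i b a
  irrefl := fun i a => L.irrefl i a
  trans := fun i a b c h1 h2 => L.trans i c b a h2 h1
  total := fun i a b => by rcases L.total i a b with h | h | h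
                           · exact Or.inr (Or.inr h)
                           · exact Or.inr (Or.inl h)
                           · exact Or.inl h

theorem flip_univ (L : NLinear n M) (hL : IsUniversalNLinear n M L) :
    IsUniversalNLinear n M (flip L) := by
  refine ⟨hL.countable, hL.infinite, ?_⟩
  intro A D hDA hdc
  obtain ⟨x, hx, hspec⟩ := hL.extension A (fun i => ↑A \ D i)
    (fun i => Set.diff_subset)
    (by
      intro i a ha b hb hab hbD
      refine ⟨ha, fun haD => hbD.2 (hdc i b hb a ha hab haD)⟩)
  refine ⟨x, hx, ?_⟩
  intro i a ha
  have h1 := hspec i a ha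
  constructor
  · intro hlt
    by_contra haD
    exact asymm L (h1.2 ⟨ha, haD⟩) hlt
  · intro haD
    have hnot : ¬ L.lt i a x := fun h => (h1.1 h).2 haD
    exact lt_of_not L i hnot (fun h => hx (h ▸ ha))

/-- a finite partial isomorphism, given as a finite set of pairs -/
def NIso (L : NLinear n M) (P : Finset (M × M)) : Prop :=
  ∀ q ∈ P, ∀ r ∈ P, ∀ i, L.lt i q.1 r.1 ↔ L.lt i q.2 r.2

theorem NIso.flip {L : NLinear n M} {P : Finset (M × M)} (h : NIso L P) :
    NIso (flip L) P := fun q hq r hr i => h r hr q hq i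

theorem NIso.snd_eq {L : NLinear n M} {P : Finset (M × M)} (h : NIso L P) (m : Fin n)
    {x y y' : M} (h1 : (x, y) ∈ P) (h2 : (x, y') ∈ P) : y = y' := by
  refine eq_of_not_lt L m ?_ ?_
  · intro hlt
    exact L.irrefl m x ((h (x,y) h1 (x,y') h2 m).2 hlt)
  · intro hlt
    exact L.irrefl m x ((h (x,y') h2 (x,y) h1 m).2 hlt)

theorem NIso.fst_eq {L : NLinear n M} {P : Finset (M × M)} (h : NIso L P) (m : Fin n)
    {x x' y : M} (h1 : (x, y) ∈ P) (h2 : (x', y) ∈ P) : x = x' := by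
  refine eq_of_not_lt L m ?_ ?_
  · intro hlt
    exact L.irrefl m y ((h (x,y) h1 (x',y) h2 m).1 hlt)
  · intro hlt
    exact L.irrefl m y ((h (x',y) h2 (x,y) h1 m).1 hlt)

theorem insertPair (L : NLinear n M) (m : Fin n) {P : Finset (M × M)} (hP : NIso L P)
    {u v : M} (hu : ∀ q ∈ P, q.1 ≠ u) (hv : ∀ q ∈ P, q.2 ≠ v)
    (hmir : ∀ i, ∀ q ∈ P, (L.lt i q.1 u ↔ L.lt i q.2 v)) :
    NIso L (insert (u, v) P) := by
  intro q hq r hr i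
  rcases Finset.mem_insert.1 hq with rfl | hq <;> rcases Finset.mem_insert.1 hr with rfl | hr
  · simp only []
    constructor <;> intro h <;> exact absurd h (L.irrefl i _)
  · -- new vs old
    have hm := hmir i r hr
    have hne1 : r.1 ≠ u := hu r hr
    have hne2 : r.2 ≠ v := hv r hr
    constructor
    · intro h
      have h1 : ¬ L.lt i r.1 u := fun hh => asymm L hh h
      have h2 : ¬ L.lt i r.2 v := fun hh => h1 (hm.2 hh)
      exact lt_of_not L i h2 hne2
    · intro h
      have h1 : ¬ L.lt i r.2 v := fun hh => asymm L hh h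
      have h2 : ¬ L.lt i r.1 u := fun hh => h1 (hm.1 hh)
      exact lt_of_not L i h2 hne1
  · -- old vs new
    exact hmir i q hq
  · exact hP q hq r hr i


theorem exists_upper (L : NLinear n M) (m : Fin n) (hne : Nonempty M)
    (hub : ∀ x : M, ∃ y, L.lt m x y) (A : Finset M) :
    ∃ u, ∀ s ∈ A, L.lt m s u := by
  classical
  induction A using Finset.induction_on with
  | empty => exact ⟨hne.some, by simp⟩
  | @insert t A hts ih =>
      obtain ⟨u, hu⟩ := ih
      rcases L.total m t u with h | h | h
      · exact ⟨u, by
          intro s hs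
          rcases Finset.mem_insert.1 hs with rfl | hs
          · exact h
          · exact hu s hs⟩
      · obtain ⟨y, hy⟩ := hub u
        refine ⟨y, ?_⟩
        intro s hs
        rcases Finset.mem_insert.1 hs with rfl | hs
        · exact h ▸ hy
        · exact L.trans m s u y (hu s hs) hy
      · obtain ⟨y, hy⟩ := hub t
        refine ⟨y, ?_⟩
        intro s hs
        rcases Finset.mem_insert.1 hs with rfl | hs
        · exact hy
        · exact L.trans m s t y (L.trans m s u t (hu s hs) h) hy

theorem star (L : NLinear n M) (hL : IsUniversalNLinear n M L) (m : Fin n)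
    (g : Equiv.Perm M)
    (hgaut : ∀ i a b, L.lt i a b ↔ L.lt i (g a) (g b))
    (hgp : ∀ x : M, ∃ y, L.lt m x y ∧ L.lt m y (g y))
    (A : Finset M) (D : Fin n → Set M)
    (hDA : ∀ i, D i ⊆ ↑A)
    (hdc : ∀ i, ∀ a ∈ A, ∀ b ∈ A, L.lt i a b → b ∈ D i → a ∈ D i)
    (hDm : ∀ t ∈ A, t ∈ D m) :
    ∃ b, b ∉ A ∧ (∀ i, ∀ t ∈ A, (L.lt i t b ↔ t ∈ D i)) ∧ L.lt m b (g b) := by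
  classical
  have hne : Nonempty M := @Infinite.nonempty M hL.infinite
  obtain ⟨u, hu⟩ := exists_upper L m hne (fun x => ⟨(hgp x).choose, (hgp x).choose_spec.1⟩) A
  obtain ⟨y0, hy0u, hy0g⟩ := hgp u
  have hAy0 : ∀ t ∈ A, L.lt m t y0 := fun t ht => L.trans m t u y0 (hu t ht) hy0u
  have hAgy0 : ∀ t ∈ A, L.lt m t (g y0) := fun t ht => L.trans m t y0 (g y0) (hAy0 t ht) hy0g
  have hy0A : y0 ∉ A := fun h => L.irrefl m y0 (hAy0 y0 h)
  have hgy0A : (g y0 : M) ∉ A := fun h => L.irrefl m _ (hAgy0 _ h)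
  have hgy0y0 : (g y0 : M) ≠ y0 := fun h => L.irrefl m y0 (by rw [h] at hy0g; exact hy0g)
  set A' : Finset M := insert y0 (insert (g y0) A) with hA'
  set D' : Fin n → Set M := fun i =>
    if i = m then (↑A ∪ {y0} : Set M)
    else (D i ∪ {v | v ∈ (↑A' : Set M) ∧ ∃ d ∈ D i, L.lt i v d}) with hD'
  have hmemA' : ∀ t ∈ A, t ∈ A' := by
    intro t ht; simp [hA', ht]
  have hy0A' : y0 ∈ A' := by simp [hA']
  have hgy0A' : (g y0 : M) ∈ A' := by simp [hA']
  have hsub : ∀ i, D' i ⊆ ↑A' := by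
    intro i v hv
    by_cases hi : i = m
    · rw [hD'] at hv; simp only [hi, if_pos] at hv
      rcases hv with hv | hv
      · exact hmemA' v hv
      · simp at hv; exact hv ▸ hy0A'
    · rw [hD'] at hv; simp only [if_neg hi] at hv
      rcases hv with hv | hv
      · exact hmemA' v (hDA i hv)
      · exact hv.1
  have hdc' : ∀ i, ∀ a ∈ A', ∀ b ∈ A', L.lt i a b → b ∈ D' i → a ∈ D' i := by
    intro i a ha b hb hab hbD
    by_cases hi : i = m
    · subst hi
      rw [hD'] at hbD ⊢; simp only [if_pos rfl] at hbD ⊢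
      have haA' := ha
      rw [hA'] at haA'
      rcases Finset.mem_insert.1 haA' with rfl | haA'
      · exact Or.inr rfl
      rcases Finset.mem_insert.1 haA' with rfl | haA'
      · exfalso
        rcases hbD with hb' | hb'
        · exact asymm L hab (hAgy0 b hb')
        · simp at hb'; subst hb'; exact asymm L hab hy0g
      · exact Or.inl haA'
    · rw [hD'] at hbD ⊢; simp only [if_neg hi] at hbD ⊢
      rcases hbD with hb' | hb'
      · exact Or.inr ⟨ha, b, hb', hab⟩
      · obtain ⟨_, d, hd, hbd⟩ := hb'
        exact Or.inr ⟨ha, d, hd, L.trans i a b d hab hbd⟩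
  obtain ⟨b, hbA', hspec⟩ := hL.extension A' D' hsub hdc'
  have hbA : b ∉ A := fun h => hbA' (hmemA' b h)
  have hy0b : L.lt m y0 b := by
    have := (hspec m y0 hy0A').2
    rw [hD'] at this; simp only [if_pos rfl] at this
    exact this (Or.inr rfl)
  have hbgy0 : L.lt m b (g y0) := by
    have h1 : ¬ L.lt m (g y0) b := by
      intro h
      have := (hspec m _ hgy0A').1 h
      rw [hD'] at this; simp only [if_pos rfl] at this
      rcases this with h' | h'
      · exact hgy0A h'
      · exact hgy0y0 h'
    exact lt_of_not L m h1 (fun h => hbA' (h ▸ hgy0A'))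
  refine ⟨b, hbA, ?_, ?_⟩
  · intro i t ht
    by_cases hi : i = m
    · constructor
      · intro _; rw [hi]; exact hDm t ht
      · intro _
        have h2 := (hspec i t (hmemA' t ht)).2
        rw [hD'] at h2; simp only [if_pos hi] at h2
        exact h2 (Or.inl ht)
    · have h1 := hspec i t (hmemA' t ht)
      rw [hD'] at h1; simp only [if_neg hi] at h1
      rw [h1]
      constructor
      · rintro (h' | ⟨_, d, hd, htd⟩)
        · exact h'
        · exact hdc i t ht d (hDA i hd) htd hd
      · exact Or.inl
  · exact L.trans m b (g y0) (g b) hbgy0 ((hgaut m y0 b).1 hy0b)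


theorem NIso.fst_eq' {L : NLinear n M} {P : Finset (M × M)} (h : NIso L P) (m : Fin n)
    {q r : M × M} (hq : q ∈ P) (hr : r ∈ P) (h2 : q.2 = r.2) : q.1 = r.1 := by
  refine eq_of_not_lt L m (fun hlt => ?_) (fun hlt => ?_)
  · have := (h q hq r hr m).1 hlt
    rw [h2] at this; exact L.irrefl m _ this
  · have := (h r hr q hq m).1 hlt
    rw [h2] at this; exact L.irrefl m _ this

theorem NIso.snd_eq' {L : NLinear n M} {P : Finset (M × M)} (h : NIso L P) (m : Fin n)
    {q r : M × M} (hq : q ∈ P) (hr : r ∈ P) (h2 : q.1 = r.1) : q.2 = r.2 := by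
  refine eq_of_not_lt L m (fun hlt => ?_) (fun hlt => ?_)
  · have := (h q hq r hr m).2 hlt
    rw [h2] at this; exact L.irrefl m _ this
  · have := (h r hr q hq m).2 hlt
    rw [h2] at this; exact L.irrefl m _ this

theorem push (L : NLinear n M) (hL : IsUniversalNLinear n M L) (m : Fin n)
    (g : Equiv.Perm M)
    (hgaut : ∀ i a b, L.lt i a b ↔ L.lt i (g a) (g b))
    (hgp : ∀ x : M, ∃ y, L.lt m x y ∧ L.lt m y (g y))
    (P : Finset (M × M)) (hP : NIso L P)
    (a x : M) (ha : ∀ q ∈ P, L.lt m q.1 a) :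
    ∃ β c, NIso L (insert (c, g β) (insert (a, β) P)) ∧
      (∀ q ∈ P, L.lt m q.1 c) ∧ L.lt m a c ∧ L.lt m x c ∧ L.lt m c (g c) := by
  classical
  -- Step A : choose β, the image of the anchor a
  set A₁ : Finset M := P.image Prod.snd with hA₁
  set D₁ : Fin n → Set M := fun i => {t | ∃ q ∈ P, q.2 = t ∧ L.lt i q.1 a} with hD₁
  have hD₁A : ∀ i, D₁ i ⊆ ↑A₁ := by
    rintro i t ⟨q, hq, rfl, -⟩
    exact Finset.mem_coe.2 (Finset.mem_image.2 ⟨q, hq, rfl⟩)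
  have hdc₁ : ∀ i, ∀ s ∈ A₁, ∀ t ∈ A₁, L.lt i s t → t ∈ D₁ i → s ∈ D₁ i := by
    intro i s hs t ht hst htD
    obtain ⟨q', hq', hq's⟩ := Finset.mem_image.1 hs
    obtain ⟨q, hq, hqt, hlt⟩ := htD
    refine ⟨q', hq', hq's, ?_⟩
    have h1 : L.lt i q'.1 q.1 := (hP q' hq' q hq i).2 (by rw [hq's, hqt]; exact hst)
    exact L.trans i _ _ _ h1 hlt
  have hDm₁ : ∀ t ∈ A₁, t ∈ D₁ m := by
    intro t ht
    obtain ⟨q, hq, rfl⟩ := Finset.mem_image.1 ht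
    exact ⟨q, hq, rfl, ha q hq⟩
  obtain ⟨β, hβA, hspec₁, hβgβ⟩ := star L hL m g hgaut hgp A₁ D₁ hD₁A hdc₁ hDm₁
  have hmem₁ : ∀ q ∈ P, q.2 ∈ A₁ := fun q hq => Finset.mem_image.2 ⟨q, hq, rfl⟩
  have hmir₁ : ∀ i, ∀ q ∈ P, (L.lt i q.1 a ↔ L.lt i q.2 β) := by
    intro i q hq
    rw [hspec₁ i q.2 (hmem₁ q hq)]
    constructor
    · intro h; exact ⟨q, hq, rfl, h⟩
    · rintro ⟨q', hq', hq'2, hlt⟩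
      rwa [NIso.fst_eq' hP m hq' hq hq'2] at hlt
  have hP₁ : NIso L (insert (a, β) P) :=
    insertPair L m hP (fun q hq => ne_of_lt L (ha q hq))
      (fun q hq h => hβA (h ▸ hmem₁ q hq)) hmir₁
  set P₁ : Finset (M × M) := insert (a, β) P with hP₁def
  have hP₁gβ : ∀ q ∈ P₁, L.lt m q.2 (g β) := by
    intro q hq
    rcases Finset.mem_insert.1 hq with rfl | hq
    · exact hβgβ
    · have h1 : L.lt m q.2 β := (hmir₁ m q hq).1 (ha q hq)
      exact L.trans m _ _ _ h1 hβgβ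
  -- Step B : choose c, the preimage of g β
  set A₂ : Finset M := insert x (P₁.image Prod.fst) with hA₂
  set D₂ : Fin n → Set M := fun i => {s | (∃ q ∈ P₁, q.1 = s ∧ L.lt i q.2 (g β)) ∨
      (s = x ∧ (i = m ∨ ∃ q ∈ P₁, L.lt i x q.1 ∧ L.lt i q.2 (g β)))} with hD₂
  have hmem₂ : ∀ q ∈ P₁, q.1 ∈ A₂ := fun q hq =>
    Finset.mem_insert.2 (Or.inr (Finset.mem_image.2 ⟨q, hq, rfl⟩))
  have hD₂A : ∀ i, D₂ i ⊆ ↑A₂ := by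
    rintro i s (⟨q, hq, rfl, -⟩ | ⟨rfl, -⟩)
    · exact Finset.mem_coe.2 (hmem₂ q hq)
    · exact Finset.mem_coe.2 (Finset.mem_insert_self _ _)
  have hdc₂ : ∀ i, ∀ s ∈ A₂, ∀ t ∈ A₂, L.lt i s t → t ∈ D₂ i → s ∈ D₂ i := by
    intro i s hs t ht hst htD
    rcases htD with ⟨q, hq, hqt, hlt⟩ | ⟨rfl, hx⟩
    · -- t is a domain point of P₁
      rcases Finset.mem_insert.1 hs with rfl | hs
      · exact Or.inr ⟨rfl, Or.inr ⟨q, hq, by rwa [hqt], hlt⟩⟩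
      · obtain ⟨q', hq', hq's⟩ := Finset.mem_image.1 hs
        refine Or.inl ⟨q', hq', hq's, ?_⟩
        have h1 : L.lt i q'.1 q.1 := by rw [hq's, hqt]; exact hst
        exact L.trans i _ _ _ ((hP₁ q' hq' q hq i).1 h1) hlt
    · -- t = x
      rcases hx with rfl | ⟨q, hq, hxq, hlt⟩
      · -- i = m
        rcases Finset.mem_insert.1 hs with rfl | hs
        · exact Or.inr ⟨rfl, Or.inl rfl⟩
        · obtain ⟨q', hq', hq's⟩ := Finset.mem_image.1 hs
          exact Or.inl ⟨q', hq', hq's, hP₁gβ q' hq'⟩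
      · rcases Finset.mem_insert.1 hs with rfl | hs
        · exact Or.inr ⟨rfl, Or.inr ⟨q, hq, hxq, hlt⟩⟩
        · obtain ⟨q', hq', hq's⟩ := Finset.mem_image.1 hs
          refine Or.inl ⟨q', hq', hq's, ?_⟩
          have h1 : L.lt i q'.1 q.1 := L.trans i _ _ _ (by rw [hq's]; exact hst) hxq
          exact L.trans i _ _ _ ((hP₁ q' hq' q hq i).1 h1) hlt
  have hDm₂ : ∀ s ∈ A₂, s ∈ D₂ m := by
    intro s hs
    rcases Finset.mem_insert.1 hs with rfl | hs
    · exact Or.inr ⟨rfl, Or.inl rfl⟩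
    · obtain ⟨q, hq, rfl⟩ := Finset.mem_image.1 hs
      exact Or.inl ⟨q, hq, rfl, hP₁gβ q hq⟩
  obtain ⟨c, hcA, hspec₂, hcgc⟩ := star L hL m g hgaut hgp A₂ D₂ hD₂A hdc₂ hDm₂
  have hdomc : ∀ q ∈ P₁, L.lt m q.1 c := fun q hq =>
    (hspec₂ m q.1 (hmem₂ q hq)).2 (hDm₂ q.1 (hmem₂ q hq))
  have hxc : L.lt m x c :=
    (hspec₂ m x (Finset.mem_insert_self _ _)).2 (hDm₂ x (Finset.mem_insert_self _ _))
  have hmir₂ : ∀ i, ∀ q ∈ P₁, (L.lt i q.1 c ↔ L.lt i q.2 (g β)) := by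
    intro i q hq
    rw [hspec₂ i q.1 (hmem₂ q hq)]
    constructor
    · rintro (⟨q', hq', hq'1, hlt⟩ | ⟨rfl, hx | ⟨q', hq', hxq', hlt⟩⟩)
      · rwa [NIso.snd_eq' hP₁ m hq' hq hq'1] at hlt
      · rw [hx]; exact hP₁gβ q hq
      · exact L.trans i _ _ _ ((hP₁ q hq q' hq' i).1 hxq') hlt
    · intro h; exact Or.inl ⟨q, hq, rfl, h⟩
  have hP₂ : NIso L (insert (c, g β) P₁) :=
    insertPair L m hP₁ (fun q hq h => hcA (h ▸ hmem₂ q hq))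
      (fun q hq => ne_of_lt L (hP₁gβ q hq)) hmir₂
  exact ⟨β, c, hP₂, fun q hq => hdomc q (Finset.mem_insert_of_mem hq),
    hdomc (a, β) (Finset.mem_insert_self _ _), hxc, hcgc⟩


theorem bk1 (L : NLinear n M) (hL : IsUniversalNLinear n M L) (m : Fin n)
    (P : Finset (M × M)) (hP : NIso L P) (x : M) :
    ∃ y, NIso L (insert (x, y) P) := by
  classical
  by_cases hx : x ∈ P.image Prod.fst
  · obtain ⟨q, hq, hq1⟩ := Finset.mem_image.1 hx
    refine ⟨q.2, ?_⟩
    have : (x, q.2) = q := by rw [← hq1]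
    rw [Finset.insert_eq_self.2 (this ▸ hq)]
    exact hP
  · set A : Finset M := P.image Prod.snd with hA
    set D : Fin n → Set M := fun i => {t | ∃ q ∈ P, q.2 = t ∧ L.lt i q.1 x} with hD
    have hDA : ∀ i, D i ⊆ ↑A := by
      rintro i t ⟨q, hq, rfl, -⟩
      exact Finset.mem_coe.2 (Finset.mem_image.2 ⟨q, hq, rfl⟩)
    have hdc : ∀ i, ∀ s ∈ A, ∀ t ∈ A, L.lt i s t → t ∈ D i → s ∈ D i := by
      intro i s hs t ht hst htD
      obtain ⟨q', hq', hq's⟩ := Finset.mem_image.1 hs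
      obtain ⟨q, hq, hqt, hlt⟩ := htD
      refine ⟨q', hq', hq's, ?_⟩
      have h1 : L.lt i q'.1 q.1 := (hP q' hq' q hq i).2 (by rw [hq's, hqt]; exact hst)
      exact L.trans i _ _ _ h1 hlt
    obtain ⟨y, hyA, hspec⟩ := hL.extension A D hDA hdc
    have hmem : ∀ q ∈ P, q.2 ∈ A := fun q hq => Finset.mem_image.2 ⟨q, hq, rfl⟩
    have hmir : ∀ i, ∀ q ∈ P, (L.lt i q.1 x ↔ L.lt i q.2 y) := by
      intro i q hq
      rw [hspec i q.2 (hmem q hq)]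
      constructor
      · intro h; exact ⟨q, hq, rfl, h⟩
      · rintro ⟨q', hq', hq'2, hlt⟩
        rwa [NIso.fst_eq' hP m hq' hq hq'2] at hlt
    exact ⟨y, insertPair L m hP
      (fun q hq h => hx (h ▸ Finset.mem_image.2 ⟨q, hq, rfl⟩))
      (fun q hq h => hyA (h ▸ hmem q hq)) hmir⟩

theorem bk2 (L : NLinear n M) (hL : IsUniversalNLinear n M L) (m : Fin n)
    (P : Finset (M × M)) (hP : NIso L P) (x aa bb : M)
    (haup : ∀ q ∈ P, L.lt m q.1 aa) (hbdn : ∀ q ∈ P, L.lt m bb q.1)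
    (hba : L.lt m bb aa) :
    ∃ w, NIso L (insert (w, x) P) ∧ L.lt m w aa ∧ L.lt m bb w := by
  classical
  by_cases hx : x ∈ P.image Prod.snd
  · obtain ⟨q, hq, hq2⟩ := Finset.mem_image.1 hx
    refine ⟨q.1, ?_, haup q hq, hbdn q hq⟩
    have : (q.1, x) = q := by rw [← hq2]
    rw [Finset.insert_eq_self.2 (this ▸ hq)]
    exact hP
  · set A : Finset M := insert aa (insert bb (P.image Prod.fst)) with hA
    set D : Fin n → Set M := fun i => {s | (∃ q ∈ P, q.1 = s ∧ L.lt i q.2 x) ∨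
        ((s = aa ∨ s = bb) ∧ ∃ q ∈ P, L.lt i s q.1 ∧ L.lt i q.2 x) ∨
        (s = bb ∧ i = m)} with hD
    have hmem : ∀ q ∈ P, q.1 ∈ A := fun q hq =>
      Finset.mem_insert.2 (Or.inr (Finset.mem_insert.2 (Or.inr (Finset.mem_image.2 ⟨q, hq, rfl⟩))))
    have haaA : aa ∈ A := Finset.mem_insert_self _ _
    have hbbA : bb ∈ A := Finset.mem_insert.2 (Or.inr (Finset.mem_insert_self _ _))
    have hDA : ∀ i, D i ⊆ ↑A := by
      rintro i s (⟨q, hq, rfl, -⟩ | ⟨rfl | rfl, -⟩ | ⟨rfl, -⟩)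
      · exact Finset.mem_coe.2 (hmem q hq)
      · exact Finset.mem_coe.2 haaA
      · exact Finset.mem_coe.2 hbbA
      · exact Finset.mem_coe.2 hbbA
    have hdc : ∀ i, ∀ s ∈ A, ∀ t ∈ A, L.lt i s t → t ∈ D i → s ∈ D i := by
      intro i s hs t ht hst htD
      have hscases : s = aa ∨ s = bb ∨ ∃ q' ∈ P, q'.1 = s := by
        rcases Finset.mem_insert.1 hs with rfl | hs
        · exact Or.inl rfl
        rcases Finset.mem_insert.1 hs with rfl | hs
        · exact Or.inr (Or.inl rfl)
        · obtain ⟨q', hq', hq's⟩ := Finset.mem_image.1 hs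
          exact Or.inr (Or.inr ⟨q', hq', hq's⟩)
      rcases htD with ⟨q, hq, hqt, hlt⟩ | ⟨-, q, hq, htq, hlt⟩ | ⟨heqt, heqi⟩
      · rcases hscases with rfl | rfl | ⟨q', hq', hq's⟩
        · exact Or.inr (Or.inl ⟨Or.inl rfl, q, hq, by rwa [hqt], hlt⟩)
        · exact Or.inr (Or.inl ⟨Or.inr rfl, q, hq, by rwa [hqt], hlt⟩)
        · refine Or.inl ⟨q', hq', hq's, ?_⟩
          have h1 : L.lt i q'.1 q.1 := by rw [hq's, hqt]; exact hst
          exact L.trans i _ _ _ ((hP q' hq' q hq i).1 h1) hlt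
      · rcases hscases with rfl | rfl | ⟨q', hq', hq's⟩
        · exact Or.inr (Or.inl ⟨Or.inl rfl, q, hq, L.trans i _ _ _ hst htq, hlt⟩)
        · exact Or.inr (Or.inl ⟨Or.inr rfl, q, hq, L.trans i _ _ _ hst htq, hlt⟩)
        · refine Or.inl ⟨q', hq', hq's, ?_⟩
          have h1 : L.lt i q'.1 q.1 := L.trans i _ _ _ (by rw [hq's]; exact hst) htq
          exact L.trans i _ _ _ ((hP q' hq' q hq i).1 h1) hlt
      · exfalso
        rw [heqt, heqi] at hst
        rcases hscases with rfl | rfl | ⟨q', hq', hq's⟩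
        · exact asymm L hst hba
        · exact L.irrefl m _ hst
        · rw [← hq's] at hst
          exact asymm L hst (hbdn q' hq')
    obtain ⟨w, hwA, hspec⟩ := hL.extension A D hDA hdc
    have hbw : L.lt m bb w := (hspec m bb hbbA).2 (Or.inr (Or.inr ⟨rfl, rfl⟩))
    have hwa : L.lt m w aa := by
      have h1 : ¬ L.lt m aa w := by
        intro h
        rcases (hspec m aa haaA).1 h with ⟨q, hq, hq1, -⟩ | ⟨-, q, hq, hltq, -⟩ | ⟨heq, -⟩
        · exact L.irrefl m aa (hq1 ▸ haup q hq)
        · exact asymm L hltq (haup q hq)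
        · exact L.irrefl m bb (heq ▸ hba)
      exact lt_of_not L m h1 (fun h => hwA (h ▸ haaA))
    have hmir : ∀ i, ∀ q ∈ P, (L.lt i q.1 w ↔ L.lt i q.2 x) := by
      intro i q hq
      rw [hspec i q.1 (hmem q hq)]
      constructor
      · rintro (⟨q', hq', hq'1, hlt⟩ | ⟨hor, -⟩ | ⟨heq, -⟩)
        · rwa [NIso.snd_eq' hP m hq' hq hq'1] at hlt
        · exfalso
          rcases hor with heq | heq
          · exact L.irrefl m aa (heq ▸ haup q hq)
          · exact L.irrefl m bb (heq ▸ hbdn q hq)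
        · exact absurd (heq ▸ hbdn q hq) (L.irrefl m bb)
      · intro h; exact Or.inl ⟨q, hq, rfl, h⟩
    refine ⟨w, insertPair L m hP (fun q hq h => hwA (h ▸ hmem q hq))
      (fun q hq h => hx (h ▸ Finset.mem_image.2 ⟨q, hq, rfl⟩)) hmir, hwa, hbw⟩


structure GState (L : NLinear n M) (m : Fin n) where
  P : Finset (M × M)
  a : M
  b : M
  iso : NIso L P
  hup : ∀ q ∈ P, L.lt m q.1 a
  hdn : ∀ q ∈ P, L.lt m b q.1
  hba : L.lt m b a

def Spec (L : NLinear n M) (m : Fin n) (g : Equiv.Perm M) (s : GState L m) (x : M)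
    (t : GState L m) : Prop :=
  s.P ⊆ t.P ∧
  (∃ β c, (s.a, β) ∈ t.P ∧ (c, g β) ∈ t.P ∧ g c = t.a) ∧
  (∃ β c, (s.b, β) ∈ t.P ∧ (c, g β) ∈ t.P ∧ g c = t.b) ∧
  L.lt m x t.a ∧ L.lt m t.b x ∧ L.lt m s.a t.a ∧ L.lt m t.b s.b ∧
  (∃ y, (x, y) ∈ t.P) ∧ (∃ w, (w, x) ∈ t.P)

theorem step (L : NLinear n M) (hL : IsUniversalNLinear n M L) (m : Fin n)
    (g : Equiv.Perm M)
    (hgaut : ∀ i a b, L.lt i a b ↔ L.lt i (g a) (g b))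
    (hgp : ∀ x : M, ∃ y, L.lt m x y ∧ L.lt m y (g y))
    (hgm : ∀ x : M, ∃ z, L.lt m z x ∧ L.lt m (g z) z)
    (s : GState L m) (x : M) : ∃ t : GState L m, Spec L m g s x t := by
  classical
  -- plus push
  obtain ⟨β, c, hIso1, hdomc, hac, hxc, hcgc⟩ :=
    push L hL m g hgaut hgp s.P s.iso s.a x s.hup
  set P₁ : Finset (M × M) := insert (c, g β) (insert (s.a, β) s.P) with hP₁
  set a₁ : M := g c with ha₁
  have hca₁ : L.lt m c a₁ := hcgc
  have hup₁ : ∀ q ∈ P₁, L.lt m q.1 a₁ := by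
    intro q hq
    rcases Finset.mem_insert.1 hq with rfl | hq
    · exact hca₁
    rcases Finset.mem_insert.1 hq with rfl | hq
    · exact L.trans m _ _ _ hac hca₁
    · exact L.trans m _ _ _ (L.trans m _ _ _ (s.hup q hq) hac) hca₁
  have hdn₁ : ∀ q ∈ P₁, L.lt m s.b q.1 := by
    intro q hq
    rcases Finset.mem_insert.1 hq with rfl | hq
    · exact L.trans m _ _ _ s.hba hac
    rcases Finset.mem_insert.1 hq with rfl | hq
    · exact s.hba
    · exact s.hdn q hq
  have hba₁ : L.lt m s.b a₁ := L.trans m _ _ _ s.hba (L.trans m _ _ _ hac hca₁)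
  have hxa₁ : L.lt m x a₁ := L.trans m _ _ _ hxc hca₁
  have hsaa₁ : L.lt m s.a a₁ := L.trans m _ _ _ hac hca₁
  -- minus push, via the flipped structure
  obtain ⟨β', c', hIso2', hdomc', hbc', hxc', hgc'c'⟩ :=
    push (flip L) (flip_univ L hL) m g (fun i a b => hgaut i b a)
      (fun z => hgm z) P₁ hIso1.flip s.b x (fun q hq => hdn₁ q hq)
  have hIso2 : NIso L (insert (c', g β') (insert (s.b, β') P₁)) := hIso2'.flip
  set P₂ : Finset (M × M) := insert (c', g β') (insert (s.b, β') P₁) with hP₂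
  set b₁ : M := g c' with hb₁
  have hb₁c' : L.lt m b₁ c' := hgc'c'
  have hdn₂ : ∀ q ∈ P₂, L.lt m b₁ q.1 := by
    intro q hq
    rcases Finset.mem_insert.1 hq with rfl | hq
    · exact hb₁c'
    rcases Finset.mem_insert.1 hq with rfl | hq
    · exact L.trans m _ _ _ hb₁c' hbc'
    · exact L.trans m _ _ _ hb₁c' (hdomc' q hq)
  have hup₂ : ∀ q ∈ P₂, L.lt m q.1 a₁ := by
    intro q hq
    rcases Finset.mem_insert.1 hq with rfl | hq
    · exact L.trans m _ _ _ hbc' hba₁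
    rcases Finset.mem_insert.1 hq with rfl | hq
    · exact hba₁
    · exact hup₁ q hq
  have hba₂ : L.lt m b₁ a₁ := L.trans m _ _ _ hb₁c' (L.trans m _ _ _ hbc' hba₁)
  have hb₁x : L.lt m b₁ x := L.trans m _ _ _ hb₁c' hxc'
  have hb₁sb : L.lt m b₁ s.b := L.trans m _ _ _ hb₁c' hbc'
  -- bookkeeping: x into the domain
  obtain ⟨y, hIso3⟩ := bk1 L hL m P₂ hIso2 x
  set P₃ : Finset (M × M) := insert (x, y) P₂ with hP₃
  have hup₃ : ∀ q ∈ P₃, L.lt m q.1 a₁ := by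
    intro q hq
    rcases Finset.mem_insert.1 hq with rfl | hq
    · exact hxa₁
    · exact hup₂ q hq
  have hdn₃ : ∀ q ∈ P₃, L.lt m b₁ q.1 := by
    intro q hq
    rcases Finset.mem_insert.1 hq with rfl | hq
    · exact hb₁x
    · exact hdn₂ q hq
  -- bookkeeping: x into the range
  obtain ⟨w, hIso4, hwa₁, hb₁w⟩ := bk2 L hL m P₃ hIso3 x a₁ b₁ hup₃ hdn₃ hba₂
  set P₄ : Finset (M × M) := insert (w, x) P₃ with hP₄
  have hup₄ : ∀ q ∈ P₄, L.lt m q.1 a₁ := by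
    intro q hq
    rcases Finset.mem_insert.1 hq with rfl | hq
    · exact hwa₁
    · exact hup₃ q hq
  have hdn₄ : ∀ q ∈ P₄, L.lt m b₁ q.1 := by
    intro q hq
    rcases Finset.mem_insert.1 hq with rfl | hq
    · exact hb₁w
    · exact hdn₃ q hq
  refine ⟨⟨P₄, a₁, b₁, hIso4, hup₄, hdn₄, hba₂⟩, ?_, ?_, ?_, hxa₁, hb₁x, hsaa₁, hb₁sb, ?_, ?_⟩
  · -- s.P ⊆ P₄
    intro q hq
    exact Finset.mem_insert_of_mem (Finset.mem_insert_of_mem (Finset.mem_insert_of_mem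
      (Finset.mem_insert_of_mem (Finset.mem_insert_of_mem (Finset.mem_insert_of_mem hq)))))
  · refine ⟨β, c, ?_, ?_, rfl⟩
    · exact Finset.mem_insert_of_mem (Finset.mem_insert_of_mem (Finset.mem_insert_of_mem
        (Finset.mem_insert_of_mem (Finset.mem_insert_of_mem (Finset.mem_insert_self _ _)))))
    · exact Finset.mem_insert_of_mem (Finset.mem_insert_of_mem (Finset.mem_insert_of_mem
        (Finset.mem_insert_of_mem (Finset.mem_insert_self _ _))))
  · refine ⟨β', c', ?_, ?_, rfl⟩
    · exact Finset.mem_insert_of_mem (Finset.mem_insert_of_mem (Finset.mem_insert_of_mem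
        (Finset.mem_insert_self _ _)))
    · exact Finset.mem_insert_of_mem (Finset.mem_insert_of_mem (Finset.mem_insert_self _ _))
  · exact ⟨y, Finset.mem_insert_of_mem (Finset.mem_insert_self _ _)⟩
  · exact ⟨w, Finset.mem_insert_self _ _⟩

end Stmt10Aux

open Stmt10Aux

/-- Let `g` be an automorphism of a universal `n`-linear order such
that every `x` has some `y >_m x` with `y <_m g y` and some `z <_m x` with `g z <_m z`.
Then there is an automorphism `h` such that `g ∘ h⁻¹ ∘ g ∘ h` has, with respect to
`<_m`, a `+`-orbital unbounded above and a `−`-orbital unbounded below. -/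
theorem stmt10 {n : ℕ} {M : Type*} (L : NLinear n M) (hL : IsUniversalNLinear n M L)
    (m : Fin n) (g : L.aut)
    (hg : ∀ x : M, (∃ y, L.lt m x y ∧ L.lt m y ((g : Equiv.Perm M) y)) ∧
      (∃ z, L.lt m z x ∧ L.lt m ((g : Equiv.Perm M) z) z)) :
    ∃ h : L.aut, L.PlusUnbAbove m ((g * h⁻¹ * g * h : L.aut) : Equiv.Perm M) ∧
      L.MinusUnbBelow m ((g * h⁻¹ * g * h : L.aut) : Equiv.Perm M) := by
  classical
  haveI : Countable M := hL.countable
  haveI : Infinite M := hL.infinite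
  set gp : Equiv.Perm M := (g : Equiv.Perm M) with hgp_def
  have hgaut : ∀ i a b, L.lt i a b ↔ L.lt i (gp a) (gp b) := g.2
  have hgp : ∀ x : M, ∃ y, L.lt m x y ∧ L.lt m y (gp y) := fun x => (hg x).1
  have hgm : ∀ x : M, ∃ z, L.lt m z x ∧ L.lt m (gp z) z := fun x => (hg x).2
  obtain ⟨e, he⟩ := exists_surjective_nat M
  -- initial state
  have p0 : M := Classical.arbitrary M
  obtain ⟨a0, ha0, -⟩ := hgp p0
  obtain ⟨b0, hb0, -⟩ := hgm p0
  have hisoe : NIso L (∅ : Finset (M × M)) := by intro q hq; simp at hq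
  set S0 : GState L m := ⟨∅, a0, b0, hisoe, by simp, by simp, L.trans m _ _ _ hb0 ha0⟩
    with hS0
  have hstep := step L hL m gp hgaut hgp hgm
  set S : ℕ → GState L m := fun k => Nat.rec S0 (fun k s => (hstep s (e k)).choose) k
    with hS_def
  have hS : ∀ k, Spec L m gp (S k) (e k) (S (k+1)) := fun k => (hstep (S k) (e k)).choose_spec
  have mono : ∀ j k, j ≤ k → (S j).P ⊆ (S k).P := by
    intro j k hjk
    induction k with
    | zero => rw [Nat.le_zero.1 hjk]
    | succ k ih =>
        rcases Nat.le_succ_iff.1 hjk with h | h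
        · exact (ih h).trans (hS k).1
        · rw [h]
  -- the limit relation
  set Rel : M → M → Prop := fun x y => ∃ k, (x, y) ∈ (S k).P with hRel_def
  have func : ∀ {x y z : M}, Rel x y → Rel x z → y = z := by
    rintro x y z ⟨k1, h1⟩ ⟨k2, h2⟩
    exact NIso.snd_eq (S (max k1 k2)).iso m
      (mono k1 _ (le_max_left _ _) h1) (mono k2 _ (le_max_right _ _) h2)
  have finj : ∀ {x y z : M}, Rel x z → Rel y z → x = y := by
    rintro x y z ⟨k1, h1⟩ ⟨k2, h2⟩
    exact NIso.fst_eq (S (max k1 k2)).iso m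
      (mono k1 _ (le_max_left _ _) h1) (mono k2 _ (le_max_right _ _) h2)
  have tot : ∀ x : M, ∃ y, Rel x y := by
    intro x
    obtain ⟨k, rfl⟩ := he x
    obtain ⟨y, hy⟩ := (hS k).2.2.2.2.2.2.2.1
    exact ⟨y, k + 1, hy⟩
  have fsurj : ∀ y : M, ∃ x, Rel x y := by
    intro y
    obtain ⟨k, rfl⟩ := he y
    obtain ⟨x, hx⟩ := (hS k).2.2.2.2.2.2.2.2
    exact ⟨x, k + 1, hx⟩
  set hfun : M → M := fun x => (tot x).choose with hfun_def
  have hrel : ∀ x, Rel x (hfun x) := fun x => (tot x).choose_spec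
  have hbij : Function.Bijective hfun := by
    constructor
    · intro x y hxy
      exact finj (hrel x) (hxy ▸ hrel y)
    · intro y
      obtain ⟨x, hx⟩ := fsurj y
      exact ⟨x, func (hrel x) hx⟩
  set hp : Equiv.Perm M := Equiv.ofBijective hfun hbij with hp_def
  have happly : ∀ {x y : M}, Rel x y → hp x = y := fun h => func (hrel _) h
  have hsymm : ∀ {x y : M}, Rel x y → hp⁻¹ y = x := by
    intro x y h
    rw [← happly h]
    exact Equiv.symm_apply_apply hp x
  have hmem : hp ∈ L.aut := by
    intro i a b
    obtain ⟨k1, h1⟩ := hrel a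
    obtain ⟨k2, h2⟩ := hrel b
    exact (S (max k1 k2)).iso (a, hp a) (mono k1 _ (le_max_left _ _) h1)
      (b, hp b) (mono k2 _ (le_max_right _ _) h2) i
  set H : L.aut := ⟨hp, hmem⟩ with hH
  set F : Equiv.Perm M := ((g * H⁻¹ * g * H : L.aut) : Equiv.Perm M) with hF_def
  have hFapp : ∀ z, F z = gp (hp⁻¹ (gp (hp z))) := fun z => rfl
  have orbitA : ∀ k, F ((S k).a) = (S (k+1)).a := by
    intro k
    obtain ⟨β, c, h1, h2, h3⟩ := (hS k).2.1
    rw [hFapp, happly ⟨k+1, h1⟩, hsymm ⟨k+1, h2⟩, h3]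
  have powA : ∀ k : ℕ, (F ^ k) ((S 0).a) = (S k).a := by
    intro k
    induction k with
    | zero => rfl
    | succ k ih => rw [pow_succ', Equiv.Perm.mul_apply, ih, orbitA]
  have orbitB : ∀ k, F ((S k).b) = (S (k+1)).b := by
    intro k
    obtain ⟨β, c, h1, h2, h3⟩ := (hS k).2.2.1
    rw [hFapp, happly ⟨k+1, h1⟩, hsymm ⟨k+1, h2⟩, h3]
  have powB : ∀ k : ℕ, (F ^ k) ((S 0).b) = (S k).b := by
    intro k
    induction k with
    | zero => rfl
    | succ k ih => rw [pow_succ', Equiv.Perm.mul_apply, ih, orbitB]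
  refine ⟨H, ⟨(S 0).a, ?_, ?_⟩, ⟨(S 0).b, ?_, ?_⟩⟩
  · rw [show ((g * H⁻¹ * g * H : L.aut) : Equiv.Perm M) ((S 0).a) = (S 1).a from orbitA 0]
    exact (hS 0).2.2.2.2.2.1
  · intro x
    obtain ⟨k, rfl⟩ := he x
    refine ⟨((k+1 : ℕ) : ℤ), ?_⟩
    rw [show ((g * H⁻¹ * g * H : L.aut) : Equiv.Perm M) = F from rfl, zpow_natCast, powA]
    exact (hS k).2.2.2.1
  · rw [show ((g * H⁻¹ * g * H : L.aut) : Equiv.Perm M) ((S 0).b) = (S 1).b from orbitB 0]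
    exact (hS 0).2.2.2.2.2.2.1
  · intro x
    obtain ⟨k, rfl⟩ := he x
    refine ⟨((k+1 : ℕ) : ℤ), ?_⟩
    rw [show ((g * H⁻¹ * g * H : L.aut) : Equiv.Perm M) = F from rfl, zpow_natCast, powB]
    exact (hS k).2.2.2.2.1
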